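/- σ_A² ≤ σ_U², and equality σ_A² = σ_U² holds if and only if for every z ∈ 𝒵 both π_s β_t(z) + π_t β_s(z) = 0 and (1 − π_t − π_s)(β_t(z) − β_s(z)) = 0. -/

import Mathlib

open MeasureTheory ProbabilityTheory Matrix
open scoped ProbabilityTheory

lemma memLp_cond' {Ω : Type*} [MeasurableSpace Ω] {P : Measure Ω} [IsFiniteMeasure P]
    {A : Set Ω} (hA : P A ≠ 0) {f : Ω → ℝ} (hf : MemLp f 2 P) : MemLp f 2 (P[|A]) := by
  show MemLp f 2 ((P A)⁻¹ • P.restrict A)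
  exact (hf.restrict A).smul_measure (ENNReal.inv_ne_top.mpr hA)

lemma int_mul' {Ω : Type*} [MeasurableSpace Ω] {μ : Measure Ω}
    {f g : Ω → ℝ} (hf : MemLp f 2 μ) (hg : MemLp g 2 μ) :
    Integrable (fun ω => f ω * g ω) μ := by
  have := hg.smul (𝕜 := ℝ) hf (p := 2) (q := 2) (r := 1)
    (hpqr := ⟨by simp [ENNReal.inv_two_add_inv_two]⟩)
  rw [memLp_one_iff_integrable] at this
  exact this

lemma var_sub_lin {Ω : Type*} [MeasurableSpace Ω] (μ : Measure Ω) [IsProbabilityMeasure μ]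
    {d : ℕ} (Y : Ω → ℝ) (X : Ω → Fin d → ℝ) (b : Fin d → ℝ)
    (hY : MemLp Y 2 μ) (hX : ∀ j, MemLp (fun ω => X ω j) 2 μ) :
    variance (fun ω => Y ω - ∑ j, X ω j * b j) μ
      = variance Y μ
        - 2 * ∑ j, b j * (∫ ω, X ω j * Y ω ∂μ - (∫ ω, X ω j ∂μ) * ∫ ω, Y ω ∂μ)
        + ∑ j, ∑ l, b j * b l *
            (∫ ω, X ω j * X ω l ∂μ - (∫ ω, X ω j ∂μ) * (∫ ω, X ω l ∂μ)) := by
  have hXb : ∀ j : Fin d, MemLp (fun ω => X ω j * b j) 2 μ := by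
    intro j
    have := (hX j).const_mul (b j)
    simpa [mul_comm] using this
  have hL : MemLp (fun ω => ∑ j, X ω j * b j) 2 μ := by
    have h0 := memLp_finset_sum' (μ := μ) (f := fun (j : Fin d) (ω : Ω) => X ω j * b j)
      Finset.univ (fun j _ => hXb j)
    have heq : (∑ j : Fin d, fun ω => X ω j * b j) = fun ω => ∑ j : Fin d, X ω j * b j := by
      ext ω; simp
    rwa [heq] at h0
  have IY : Integrable Y μ := hY.integrable one_le_two
  have IXj : ∀ j, Integrable (fun ω => X ω j) μ := fun j => (hX j).integrable one_le_two
  have IY2 : Integrable (fun ω => Y ω ^ 2) μ := by simpa [sq] using int_mul' hY hY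
  have IXY : ∀ j, Integrable (fun ω => X ω j * Y ω) μ := fun j => int_mul' (hX j) hY
  have IXX : ∀ j l, Integrable (fun ω => X ω j * X ω l) μ := fun j l => int_mul' (hX j) (hX l)
  have IYL : Integrable (fun ω => Y ω * ∑ j, X ω j * b j) μ := int_mul' hY hL
  have IL2 : Integrable (fun ω => (∑ j, X ω j * b j) ^ 2) μ := by simpa [sq] using int_mul' hL hL
  have hEL : ∫ ω, (∑ j, X ω j * b j) ∂μ = ∑ j, (∫ ω, X ω j ∂μ) * b j := by
    rw [integral_finset_sum _ (fun j _ => (IXj j).mul_const _)]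
    simp_rw [integral_mul_const]
  have hEYL : ∫ ω, Y ω * ∑ j, X ω j * b j ∂μ = ∑ j, (∫ ω, X ω j * Y ω ∂μ) * b j := by
    have h1 : ∀ ω, Y ω * ∑ j, X ω j * b j = ∑ j, (X ω j * Y ω) * b j := by
      intro ω; rw [Finset.mul_sum]; exact Finset.sum_congr rfl fun j _ => by ring
    simp_rw [h1]
    rw [integral_finset_sum _ (fun j _ => (IXY j).mul_const _)]
    simp_rw [integral_mul_const]
  have hEL2 : ∫ ω, (∑ j, X ω j * b j) ^ 2 ∂μ
      = ∑ j, ∑ l, (∫ ω, X ω j * X ω l ∂μ) * (b j * b l) := by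
    have h1 : ∀ ω, (∑ j, X ω j * b j) ^ 2 = ∑ j, ∑ l, (X ω j * X ω l) * (b j * b l) := by
      intro ω
      rw [sq, Finset.sum_mul_sum]
      exact Finset.sum_congr rfl fun j _ => Finset.sum_congr rfl fun l _ => by ring
    simp_rw [h1]
    rw [integral_finset_sum _
      (fun j _ => integrable_finset_sum _ (fun l _ => (IXX j l).mul_const _))]
    refine Finset.sum_congr rfl fun j _ => ?_
    rw [integral_finset_sum _ (fun l _ => (IXX j l).mul_const _)]
    simp_rw [integral_mul_const]
  rw [show (fun ω => Y ω - ∑ j, X ω j * b j)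
      = Y - (fun ω => ∑ j, X ω j * b j) from rfl]
  rw [variance_eq_sub (hY.sub hL), variance_eq_sub hY]
  have e1 : ∫ ω, ((Y - fun ω => ∑ j, X ω j * b j) ^ 2) ω ∂μ
      = ∫ ω, Y ω ^ 2 ∂μ - 2 * ∫ ω, Y ω * ∑ j, X ω j * b j ∂μ
        + ∫ ω, (∑ j, X ω j * b j) ^ 2 ∂μ := by
    have h1 : ∀ ω, ((Y - fun ω => ∑ j, X ω j * b j) ^ 2) ω
        = Y ω ^ 2 - 2 * (Y ω * ∑ j, X ω j * b j) + (∑ j, X ω j * b j) ^ 2 := by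
      intro ω; simp [Pi.pow_apply, Pi.sub_apply]; ring
    simp_rw [h1]
    have IB : Integrable (fun ω => 2 * (Y ω * ∑ j, X ω j * b j)) μ := IYL.const_mul 2
    have IA : Integrable (fun ω => Y ω ^ 2 - 2 * (Y ω * ∑ j, X ω j * b j)) μ := IY2.sub IB
    rw [integral_add IA IL2, integral_sub IY2 IB, integral_const_mul]
  have e2 : ∫ ω, (Y - fun ω => ∑ j, X ω j * b j) ω ∂μ
      = ∫ ω, Y ω ∂μ - ∑ j, (∫ ω, X ω j ∂μ) * b j := by
    have h1 : ∀ ω, (Y - fun ω => ∑ j, X ω j * b j) ω = Y ω - ∑ j, X ω j * b j := fun ω => rfl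
    simp_rw [h1]
    rw [integral_sub IY (by simpa using hL.integrable one_le_two), hEL]
  show ∫ ω, ((Y - fun ω => ∑ j, X ω j * b j) ^ 2) ω ∂μ
      - (∫ ω, (Y - fun ω => ∑ j, X ω j * b j) ω ∂μ) ^ 2 = _
  rw [e1, e2, hEYL, hEL2]
  show _ = (∫ ω, (Y ^ 2) ω ∂μ) - (∫ ω, Y ω ∂μ) ^ 2 - _ + _
  have h2 : ∫ ω, (Y ^ 2) ω ∂μ = ∫ ω, Y ω ^ 2 ∂μ := rfl
  rw [h2]
  set m := ∫ ω, Y ω ∂μ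
  set A := ∫ ω, Y ω ^ 2 ∂μ
  have exp1 : ∑ j, b j * ((∫ ω, X ω j * Y ω ∂μ) - (∫ ω, X ω j ∂μ) * m)
      = ∑ j, (∫ ω, X ω j * Y ω ∂μ) * b j - (∑ j, (∫ ω, X ω j ∂μ) * b j) * m := by
    rw [Finset.sum_mul, ← Finset.sum_sub_distrib]
    exact Finset.sum_congr rfl fun j _ => by ring
  have exp2 : ∑ j, ∑ l, b j * b l *
        ((∫ ω, X ω j * X ω l ∂μ) - (∫ ω, X ω j ∂μ) * (∫ ω, X ω l ∂μ))
      = ∑ j, ∑ l, (∫ ω, X ω j * X ω l ∂μ) * (b j * b l)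
        - (∑ j, (∫ ω, X ω j ∂μ) * b j) * (∑ l, (∫ ω, X ω l ∂μ) * b l) := by
    rw [Finset.sum_mul_sum, ← Finset.sum_sub_distrib]
    refine Finset.sum_congr rfl fun j _ => ?_
    rw [← Finset.sum_sub_distrib]
    exact Finset.sum_congr rfl fun l _ => by ring
  rw [exp1, exp2]
  ring

lemma dot_symm' {d : ℕ} (S : Matrix (Fin d) (Fin d) ℝ) (hS : S.IsHermitian)
    (a b : Fin d → ℝ) : b ⬝ᵥ (S *ᵥ a) = a ⬝ᵥ (S *ᵥ b) := by
  rw [dotProduct_comm, dotProduct_mulVec, ← Matrix.mulVec_transpose]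
  congr 1
  rw [show Sᵀ = S from by simpa [Matrix.IsHermitian, conjTranspose_eq_transpose_of_trivial] using hS]

lemma quad_identity' {d : ℕ} (S : Matrix (Fin d) (Fin d) ℝ) (hS : S.IsHermitian)
    (a b : Fin d → ℝ) (pt ps : ℝ) (ht : 0 < pt) (hs : 0 < ps) :
    a ⬝ᵥ (S *ᵥ a) / pt + b ⬝ᵥ (S *ᵥ b) / ps - (a - b) ⬝ᵥ (S *ᵥ (a - b))
      = (ps • a + pt • b) ⬝ᵥ (S *ᵥ (ps • a + pt • b)) / (pt * ps * (pt + ps))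
        + ((1 - pt - ps) / (pt + ps)) * ((a - b) ⬝ᵥ (S *ᵥ (a - b))) := by
  have hba := dot_symm' S hS a b
  simp only [Matrix.mulVec_add, Matrix.mulVec_smul, Matrix.mulVec_sub,
    add_dotProduct, smul_dotProduct, dotProduct_add, dotProduct_smul,
    sub_dotProduct, dotProduct_sub, smul_eq_mul]
  rw [hba]
  field_simp
  ring

lemma posdef_nonneg' {d : ℕ} {S : Matrix (Fin d) (Fin d) ℝ} (hS : S.PosDef)
    (v : Fin d → ℝ) : 0 ≤ v ⬝ᵥ (S *ᵥ v) := by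
  simpa using hS.posSemidef.dotProduct_mulVec_nonneg v

lemma posdef_zero_iff' {d : ℕ} {S : Matrix (Fin d) (Fin d) ℝ} (hS : S.PosDef)
    (v : Fin d → ℝ) : v ⬝ᵥ (S *ᵥ v) = 0 ↔ v = 0 := by
  constructor
  · intro h
    by_contra hv
    have := hS.dotProduct_mulVec_pos hv
    simp only [star_trivial] at this
    exact absurd h (ne_of_gt this)
  · rintro rfl; simp

lemma dot_expand2 {d : ℕ} (S : Matrix (Fin d) (Fin d) ℝ) (b : Fin d → ℝ) :
    b ⬝ᵥ (S *ᵥ b) = ∑ j, ∑ l, b j * b l * S j l := by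
  simp_rw [dotProduct, Matrix.mulVec, dotProduct, Finset.mul_sum]
  exact Finset.sum_congr rfl fun j _ => Finset.sum_congr rfl fun l _ => by ring

/-- In the population setup, `σA² ≤ σU²`, with equality iff for every
stratum `z` both `πs β_t(z) + πt β_s(z) = 0` and `(1 − πt − πs)(β_t(z) − β_s(z)) = 0`. -/
theorem stmt5 {Ω : Type*} [MeasurableSpace Ω] (P : Measure Ω) [IsProbabilityMeasure P]
    {𝓦 : Type*} [MeasurableSpace 𝓦]
    {𝓩 : Type*} [Fintype 𝓩] [MeasurableSpace 𝓩] [MeasurableSingletonClass 𝓩]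
    {k d : ℕ} (hk : 2 ≤ k)
    (π : Fin k → ℝ) (hπ : ∀ t, π t ∈ Set.Ioo (0 : ℝ) 1) (hπsum : ∑ t, π t = 1)
    (Y : Fin k → Ω → ℝ) (W : Ω → 𝓦)
    (hYmeas : ∀ t, Measurable (Y t)) (hWmeas : Measurable W)
    (hY2 : ∀ t, MemLp (Y t) 2 P)
    (g : 𝓦 → 𝓩) (hg : Measurable g)
    (Z : Ω → 𝓩) (hZdef : ∀ ω, Z ω = g (W ω))
    (hZpos : ∀ z, 0 < P {ω | Z ω = z})
    (h : 𝓦 → Fin d → ℝ) (hh : Measurable h)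
    (X : Ω → Fin d → ℝ) (hXdef : ∀ ω, X ω = h (W ω))
    (hX2 : ∀ j, MemLp (fun ω => X ω j) 2 P)
    (hXY2 : ∀ t j, MemLp (fun ω => X ω j * Y t ω) 2 P)
    -- conditional measures and stratum probabilities
    (condP : 𝓩 → Measure Ω) (hcondP : ∀ z, condP z = P[|{ω | Z ω = z}])
    (pz : 𝓩 → ℝ) (hpz : ∀ z, pz z = (P {ω | Z ω = z}).toReal)
    -- conditional covariance matrices, assumed positive definite
    (Smat : 𝓩 → Matrix (Fin d) (Fin d) ℝ)
    (hSmat : ∀ z j l, Smat z j l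
      = ∫ ω, X ω j * X ω l ∂(condP z)
        - (∫ ω, X ω j ∂(condP z)) * (∫ ω, X ω l ∂(condP z)))
    (hSpd : ∀ z, (Smat z).PosDef)
    -- projection coefficients
    (β : Fin k → 𝓩 → Fin d → ℝ)
    (hβ : ∀ t z, β t z = (Smat z)⁻¹ *ᵥ fun j =>
      ∫ ω, X ω j * Y t ω ∂(condP z)
        - (∫ ω, X ω j ∂(condP z)) * (∫ ω, Y t ω ∂(condP z)))
    -- the two fixed treatments
    (tt ss : Fin k) (hts : tt ≠ ss)
    -- the asymptotic variance components
    (σU2 σA2 : ℝ)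
    (hσU2 : σU2 = ∑ z, pz z *
      (variance (Y tt) (condP z) / π tt + variance (Y ss) (condP z) / π ss))
    (hσA2 : σA2
      = (∑ z, pz z *
          (variance (fun ω => Y tt ω - ∑ j, X ω j * β tt z j) (condP z) / π tt
            + variance (fun ω => Y ss ω - ∑ j, X ω j * β ss z j) (condP z) / π ss))
        + ∑ z, pz z *
            ((β tt z - β ss z) ⬝ᵥ (Smat z *ᵥ (β tt z - β ss z)))) :
    σA2 ≤ σU2 ∧
      (σA2 = σU2 ↔ ∀ z,
        π ss • β tt z + π tt • β ss z = 0
          ∧ (1 - π tt - π ss) • (β tt z - β ss z) = 0) := by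
  have hπt : 0 < π tt := (hπ tt).1
  have hπs : 0 < π ss := (hπ ss).1
  have hr : 0 < π tt + π ss := by linarith
  have hδ : 0 ≤ 1 - π tt - π ss := by
    have hle : ∑ t ∈ ({tt, ss} : Finset (Fin k)), π t ≤ ∑ t, π t :=
      Finset.sum_le_sum_of_subset_of_nonneg (Finset.subset_univ _)
        (fun i _ _ => (hπ i).1.le)
    rw [Finset.sum_pair hts, hπsum] at hle
    linarith
  have hZm : Measurable Z := by
    have hZ' : Z = fun ω => g (W ω) := funext hZdef
    rw [hZ']; exact hg.comp hWmeas
  have hA0 : ∀ z, P {ω | Z ω = z} ≠ 0 := fun z => (hZpos z).ne'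
  haveI hprob : ∀ z, IsProbabilityMeasure (condP z) := by
    intro z; rw [hcondP]; exact cond_isProbabilityMeasure (hA0 z)
  have hYc : ∀ t z, MemLp (Y t) 2 (condP z) := by
    intro t z; rw [hcondP]; exact memLp_cond' (hA0 z) (hY2 t)
  have hXc : ∀ z j, MemLp (fun ω => X ω j) 2 (condP z) := by
    intro z j; rw [hcondP]; exact memLp_cond' (hA0 z) (hX2 j)
  have hpzpos : ∀ z, 0 < pz z := by
    intro z; rw [hpz]; exact ENNReal.toReal_pos (hA0 z) (measure_ne_top P _)
  have hSβ : ∀ t z, Smat z *ᵥ β t z = fun j =>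
      ∫ ω, X ω j * Y t ω ∂(condP z)
        - (∫ ω, X ω j ∂(condP z)) * (∫ ω, Y t ω ∂(condP z)) := by
    intro t z
    rw [hβ, Matrix.mulVec_mulVec,
      Matrix.mul_nonsing_inv _ (isUnit_iff_ne_zero.mpr (hSpd z).det_pos.ne'),
      Matrix.one_mulVec]
  have hvar : ∀ t z, variance (fun ω => Y t ω - ∑ j, X ω j * β t z j) (condP z)
      = variance (Y t) (condP z) - β t z ⬝ᵥ (Smat z *ᵥ β t z) := by
    intro t z
    rw [var_sub_lin (condP z) (Y t) X (β t z) (hYc t z) (hXc z)]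
    have h1 : ∑ j, β t z j * ((∫ ω, X ω j * Y t ω ∂condP z)
          - (∫ ω, X ω j ∂condP z) * ∫ ω, Y t ω ∂condP z)
        = β t z ⬝ᵥ (Smat z *ᵥ β t z) := by
      rw [hSβ t z]; rfl
    have h2 : ∑ j, ∑ l, β t z j * β t z l *
          ((∫ ω, X ω j * X ω l ∂condP z)
            - (∫ ω, X ω j ∂condP z) * ∫ ω, X ω l ∂condP z)
        = β t z ⬝ᵥ (Smat z *ᵥ β t z) := by
      rw [dot_expand2]
      exact Finset.sum_congr rfl fun j _ => Finset.sum_congr rfl fun l _ => by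
        rw [hSmat z j l]
    rw [h1, h2]; ring
  have key : σU2 - σA2 = ∑ z, pz z *
      ((π ss • β tt z + π tt • β ss z) ⬝ᵥ
          (Smat z *ᵥ (π ss • β tt z + π tt • β ss z)) / (π tt * π ss * (π tt + π ss))
        + ((1 - π tt - π ss) / (π tt + π ss)) *
            ((β tt z - β ss z) ⬝ᵥ (Smat z *ᵥ (β tt z - β ss z)))) := by
    rw [hσU2, hσA2]
    simp_rw [hvar]
    rw [← Finset.sum_add_distrib, ← Finset.sum_sub_distrib]
    refine Finset.sum_congr rfl fun z _ => ?_
    rw [← quad_identity' (Smat z) (hSpd z).1 (β tt z) (β ss z) (π tt) (π ss) hπt hπs]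
    ring
  have hden : (0:ℝ) < π tt * π ss * (π tt + π ss) := by positivity
  have hn1 : ∀ z, 0 ≤ (π ss • β tt z + π tt • β ss z) ⬝ᵥ
      (Smat z *ᵥ (π ss • β tt z + π tt • β ss z)) / (π tt * π ss * (π tt + π ss)) :=
    fun z => div_nonneg (posdef_nonneg' (hSpd z) _) hden.le
  have hn2 : ∀ z, 0 ≤ ((1 - π tt - π ss) / (π tt + π ss)) *
      ((β tt z - β ss z) ⬝ᵥ (Smat z *ᵥ (β tt z - β ss z))) :=
    fun z => mul_nonneg (div_nonneg hδ hr.le) (posdef_nonneg' (hSpd z) _)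
  have hterm : ∀ z, 0 ≤ pz z *
      ((π ss • β tt z + π tt • β ss z) ⬝ᵥ
          (Smat z *ᵥ (π ss • β tt z + π tt • β ss z)) / (π tt * π ss * (π tt + π ss))
        + ((1 - π tt - π ss) / (π tt + π ss)) *
            ((β tt z - β ss z) ⬝ᵥ (Smat z *ᵥ (β tt z - β ss z)))) :=
    fun z => mul_nonneg (hpzpos z).le (add_nonneg (hn1 z) (hn2 z))
  have hsum_nonneg : 0 ≤ σU2 - σA2 := by
    rw [key]; exact Finset.sum_nonneg fun z _ => hterm z
  refine ⟨by linarith, ?_⟩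
  rw [show (σA2 = σU2) ↔ σU2 - σA2 = 0 by constructor <;> intro hq <;> linarith]
  rw [key, Finset.sum_eq_zero_iff_of_nonneg (fun z _ => hterm z)]
  constructor
  · intro H z
    have h0 := H z (Finset.mem_univ z)
    have h1 : (π ss • β tt z + π tt • β ss z) ⬝ᵥ
          (Smat z *ᵥ (π ss • β tt z + π tt • β ss z)) / (π tt * π ss * (π tt + π ss))
        + ((1 - π tt - π ss) / (π tt + π ss)) *
            ((β tt z - β ss z) ⬝ᵥ (Smat z *ᵥ (β tt z - β ss z))) = 0 := by
      rcases mul_eq_zero.mp h0 with hq | hq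
      · exact absurd hq (hpzpos z).ne'
      · exact hq
    obtain ⟨ha, hb⟩ := (add_eq_zero_iff_of_nonneg (hn1 z) (hn2 z)).mp h1
    constructor
    · have hU : (π ss • β tt z + π tt • β ss z) ⬝ᵥ
          (Smat z *ᵥ (π ss • β tt z + π tt • β ss z)) = 0 := by
        rcases div_eq_zero_iff.mp ha with hq | hq
        · exact hq
        · exact absurd hq hden.ne'
      exact (posdef_zero_iff' (hSpd z) _).mp hU
    · rcases mul_eq_zero.mp hb with hq | hq
      · have : 1 - π tt - π ss = 0 := by
          rcases div_eq_zero_iff.mp hq with hq' | hq'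
          · exact hq'
          · exact absurd hq' hr.ne'
        rw [this, zero_smul]
      · have hv0 : β tt z - β ss z = 0 := (posdef_zero_iff' (hSpd z) _).mp hq
        rw [hv0, smul_zero]
  · intro H z _
    obtain ⟨h1, h2⟩ := H z
    rw [h1]
    simp only [Matrix.mulVec_zero, dotProduct_zero, zero_div, zero_add]
    rcases smul_eq_zero.mp h2 with hq | hq
    · rw [hq, zero_div, zero_mul, mul_zero]
    · rw [hq]
      simp
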